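/- For positive integers a and b, the rank polynomial of the circular fence poset F̄((1,a,1,b)) is R̄((1,a,1,b);q) = [a+2]_q·[b+2]_q − q^{a+1} − q^{b+1}, where [k]_q = 1+q+⋯+q^{k−1}; in particular F̄((1,a,1,b)) has exactly (a+2)(b+2)−2 lower ideals. -/

import Mathlib

attribute [local instance] Classical.propDecidable

noncomputable section

/-- `α` is a composition: a nonempty list of positive integers. -/
def IsComposition (α : List ℕ) : Prop := α ≠ [] ∧ ∀ p ∈ α, 0 < p

/-- The 0-based index of the segment of the composition `α` containing edge `e`,
where edge `e` joins nodes `e` and `e+1` (nodes are 0-indexed, so node `i`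
is the element `x_{i+1}` of the fence). -/
def segIdx (α : List ℕ) (e : ℕ) : ℕ :=
  ((List.range α.length).filter fun j => decide ((α.take (j + 1)).sum ≤ e)).length

/-- Edge `e` of the fence of `α` points upwards (node `e` ⪯ node `e+1`):
edges in odd (1-based) segments point up, edges in even segments point down. -/
def upEdge (α : List ℕ) (e : ℕ) : Prop := Even (segIdx α e)

/-- The defining relations of the fence poset `F(α)` on `Fin (α.sum + 1)`:
`fenceStep α x y` holds iff `x ⪯ y` is one of the generating (cover) relations. -/
def fenceStep (α : List ℕ) (x y : Fin (α.sum + 1)) : Prop :=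
  (y.val = x.val + 1 ∧ upEdge α x.val) ∨ (x.val = y.val + 1 ∧ ¬ upEdge α y.val)

/-- The order of the fence poset `F(α)`, i.e. the partial order generated by
the defining relations. -/
def fenceLE (α : List ℕ) : Fin (α.sum + 1) → Fin (α.sum + 1) → Prop :=
  Relation.ReflTransGen (fenceStep α)

/-- Lower (order) ideals of the fence poset `F(α)`. -/
def IsFenceIdeal (α : List ℕ) (I : Finset (Fin (α.sum + 1))) : Prop :=
  ∀ x y, fenceLE α x y → y ∈ I → x ∈ I

/-- `fenceRank α k` is the number of lower ideals of `F(α)` of size `k`;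
the rank sequence of `F(α)` is `fenceRank α 0, …, fenceRank α (α.sum + 1)`. -/
def fenceRank (α : List ℕ) (k : ℕ) : ℕ :=
  Nat.card {I : Finset (Fin (α.sum + 1)) // IsFenceIdeal α I ∧ I.card = k}

/-- Defining relations of the circular fence poset `F̄(α)` on `Fin α.sum`:
as for the fence, but node `α.sum` (that is, `x_{n+1}`) is identified with node `0`. -/
def cStep (α : List ℕ) (x y : Fin α.sum) : Prop :=
  (y.val = (x.val + 1) % α.sum ∧ upEdge α x.val) ∨
  (x.val = (y.val + 1) % α.sum ∧ ¬ upEdge α y.val)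

/-- The order of the circular fence poset `F̄(α)`. -/
def cLE (α : List ℕ) : Fin α.sum → Fin α.sum → Prop :=
  Relation.ReflTransGen (cStep α)

/-- Lower (order) ideals of the circular fence poset `F̄(α)`. -/
def IsCIdeal (α : List ℕ) (I : Finset (Fin α.sum)) : Prop :=
  ∀ x y, cLE α x y → y ∈ I → x ∈ I

/-- `cRank α k` is the number of lower ideals of `F̄(α)` of size `k`;
the rank sequence of `F̄(α)` is `cRank α 0, …, cRank α α.sum`. -/
def cRank (α : List ℕ) (k : ℕ) : ℕ :=
  Nat.card {I : Finset (Fin α.sum) // IsCIdeal α I ∧ I.card = k}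

/-- The sequence `a 0, …, a m` is unimodal. -/
def Unimodal (a : ℕ → ℕ) (m : ℕ) : Prop :=
  ∃ j ≤ m, (∀ i < j, a i ≤ a (i + 1)) ∧ ∀ i, j ≤ i → i < m → a (i + 1) ≤ a i

/-- The sequence `a 0, …, a m` is bottom interlacing:
`a m ≤ a 0 ≤ a (m-1) ≤ a 1 ≤ ⋯ ≤ a ⌊m/2⌋`. -/
def BottomInterlacing (a : ℕ → ℕ) (m : ℕ) : Prop :=
  (∀ i, 2 * i ≤ m → a (m - i) ≤ a i) ∧ ∀ i, 2 * i + 1 < m → a i ≤ a (m - 1 - i)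

/-- The sequence `a 0, …, a m` is top interlacing:
`a 0 ≤ a m ≤ a 1 ≤ a (m-1) ≤ ⋯ ≤ a ⌈m/2⌉`. -/
def TopInterlacing (a : ℕ → ℕ) (m : ℕ) : Prop :=
  (∀ i, 2 * i ≤ m → a i ≤ a (m - i)) ∧ ∀ i, 2 * i + 1 < m → a (m - i) ≤ a (i + 1)

/-- The sequence `a 0, …, a m` is symmetric. -/
def SymmetricSeq (a : ℕ → ℕ) (m : ℕ) : Prop := ∀ k ≤ m, a k = a (m - k)

/-- Rowmotion for the order relation `r` on `Fin m`: `rhoRel r I` is the lower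
ideal generated by the minimal elements of the complement of `I`. -/
def rhoRel {m : ℕ} (r : Fin m → Fin m → Prop) (I : Finset (Fin m)) : Finset (Fin m) :=
  Finset.univ.filter fun x => ∃ y, y ∉ I ∧ (∀ z, r z y → z ≠ y → z ∈ I) ∧ r x y

/-- The (forward) orbit of `I` under a rowmotion map `ρ`. -/
def orbitOf {m : ℕ} (ρ : Finset (Fin m) → Finset (Fin m)) (I : Finset (Fin m)) :
    Finset (Finset (Fin m)) :=
  Finset.univ.filter fun J => ∃ k, ρ^[k] I = J

/-- The number of maximal elements of `I` viewed as a subposet of the order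
with relation `r`. -/
def maxCount {m : ℕ} (r : Fin m → Fin m → Prop) (I : Finset (Fin m)) : ℕ :=
  (I.filter fun x => ∀ y ∈ I, r x y → y = x).card

end

namespace CF

lemma sumL (a b : ℕ) : [1,a,1,b].sum = a+b+2 := by simp; ring

lemma upEdge_iff (a b e : ℕ) (ha : 0 < a) (hb : 0 < b) (he : e < a+b+2) :
    upEdge [1,a,1,b] e ↔ e = 0 ∨ e = a+1 := by
  have h : segIdx [1,a,1,b] e = if e = 0 then 0 else if e ≤ a then 1 else if e = a+1 then 2 else 3 := by
    rcases Nat.lt_or_ge e 1 with h1 | h1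
    · have e0 : e = 0 := by omega
      subst e0
      simp [segIdx, List.filter]
    · rcases Nat.lt_or_ge e (1+a) with h2 | h2
      · have hA : ¬ (1 + a ≤ e) := by omega
        have hB : ¬ (1 + (a+1) ≤ e) := by omega
        have hC : ¬ (1 + (a+(1+b)) ≤ e) := by omega
        simp [segIdx, List.filter, List.range_succ, h1, hA, hB, hC]
        split_ifs <;> omega
      · rcases Nat.lt_or_ge e (2+a) with h3 | h3
        · have hB : ¬ (1 + (a+1) ≤ e) := by omega
          have hC : ¬ (1 + (a+(1+b)) ≤ e) := by omega
          simp [segIdx, List.filter, List.range_succ, h1, h2, hB, hC]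
          split_ifs <;> omega
        · have hB : (1 + (a+1) ≤ e) := by omega
          have hC : ¬ (1 + (a+(1+b)) ≤ e) := by omega
          simp [segIdx, List.filter, List.range_succ, h1, h2, hB, hC]
          split_ifs <;> omega
  rw [upEdge, h]
  split_ifs <;> simp [Nat.even_iff] <;> omega

lemma cstep_iff (a b : ℕ) (ha : 0 < a) (hb : 0 < b) (x y : Fin ([1,a,1,b].sum)) :
    cStep [1,a,1,b] x y ↔
      (x.val = 0 ∧ y.val = 1) ∨ (x.val = a+1 ∧ y.val = a+2) ∨
      (1 ≤ y.val ∧ y.val ≤ a ∧ x.val = y.val+1) ∨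
      (a+2 ≤ y.val ∧ y.val ≤ a+b ∧ x.val = y.val+1) ∨
      (y.val = a+b+1 ∧ x.val = 0) := by
  have hs := sumL a b
  have hx : x.val < a+b+2 := by have := x.isLt; omega
  have hy : y.val < a+b+2 := by have := y.isLt; omega
  have hmx : (x.val + 1) % [1,a,1,b].sum = if x.val + 1 = a+b+2 then 0 else x.val + 1 := by
    split_ifs with h
    · rw [show x.val + 1 = [1,a,1,b].sum by omega, Nat.mod_self]
    · exact Nat.mod_eq_of_lt (by omega)
  have hmy : (y.val + 1) % [1,a,1,b].sum = if y.val + 1 = a+b+2 then 0 else y.val + 1 := by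
    split_ifs with h
    · rw [show y.val + 1 = [1,a,1,b].sum by omega, Nat.mod_self]
    · exact Nat.mod_eq_of_lt (by omega)
  rw [cStep, hmx, hmy, upEdge_iff a b x.val ha hb hx, upEdge_iff a b y.val ha hb hy]
  split_ifs <;> omega

def memS (a b u v t : ℕ) : Prop :=
  if t = 0 then 1 ≤ v else if t ≤ a+1 then a+2 ≤ u + t else a+b+3 ≤ v + t

noncomputable def Sset (a b u v : ℕ) : Finset (Fin ([1,a,1,b].sum)) :=
  Finset.univ.filter fun x => memS a b u v x.val

lemma mem_Sset {a b u v : ℕ} {x : Fin ([1,a,1,b].sum)} :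
    x ∈ Sset a b u v ↔ memS a b u v x.val := by simp only [Sset, Finset.mem_filter, Finset.mem_univ, true_and]

lemma Sset_ideal (a b u v : ℕ) (ha : 0 < a) (hb : 0 < b)
    (hu : u ≤ a+1) (hv : v ≤ b+1) (h1 : ¬(u = a+1 ∧ v = 0)) (h2 : ¬(u = 0 ∧ v = b+1)) :
    IsCIdeal [1,a,1,b] (Sset a b u v) := by
  have hs := sumL a b
  have key : ∀ x y : Fin ([1,a,1,b].sum), cStep [1,a,1,b] x y →
      y ∈ Sset a b u v → x ∈ Sset a b u v := by
    intro x y hxy hy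
    have hx' : x.val < a+b+2 := by have := x.isLt; omega
    have hy' : y.val < a+b+2 := by have := y.isLt; omega
    rw [cstep_iff a b ha hb] at hxy
    rw [mem_Sset] at hy ⊢
    unfold memS at hy ⊢
    split_ifs at hy ⊢ <;> omega
  intro x y hle hy
  induction hle using Relation.ReflTransGen.head_induction_on with
  | refl => exact hy
  | head hstep _ ih => exact key _ _ hstep ih

lemma Sset_succ_u (a b u v : ℕ) (hu : u ≤ a) :
    Sset a b (u+1) v = insert ⟨a+1-u, by have := sumL a b; omega⟩ (Sset a b u v) := by
  ext x
  have hx' : x.val < a+b+2 := by have := x.isLt; have := sumL a b; omega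
  simp only [mem_Sset, Finset.mem_insert, Fin.ext_iff, memS]
  split_ifs <;> simp <;> omega

lemma notmem_u (a b u v : ℕ) (hu : u ≤ a) :
    (⟨a+1-u, by have := sumL a b; omega⟩ : Fin ([1,a,1,b].sum)) ∉ Sset a b u v := by
  simp only [mem_Sset, memS]
  split_ifs <;> omega

lemma Sset_succ_v (a b u v : ℕ) (hv : v ≤ b) :
    Sset a b u (v+1) =
      insert ⟨if v = 0 then 0 else a+b+2-v, by have := sumL a b; split_ifs <;> omega⟩ (Sset a b u v) := by
  ext x
  have hx' : x.val < a+b+2 := by have := x.isLt; have := sumL a b; omega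
  simp only [mem_Sset, Finset.mem_insert, Fin.ext_iff, memS]
  split_ifs <;> simp <;> omega

lemma notmem_v (a b u v : ℕ) (hv : v ≤ b) :
    (⟨if v = 0 then 0 else a+b+2-v, by have := sumL a b; split_ifs <;> omega⟩ : Fin ([1,a,1,b].sum)) ∉
      Sset a b u v := by
  simp only [mem_Sset, memS]
  split_ifs <;> omega

lemma Sset_zero (a b : ℕ) : Sset a b 0 0 = ∅ := by
  ext x
  have hx' : x.val < a+b+2 := by have := x.isLt; have := sumL a b; omega
  simp only [mem_Sset, memS, Finset.notMem_empty, iff_false]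
  split_ifs <;> omega

lemma card_Sset_u (a b : ℕ) : ∀ u, u ≤ a+1 → (Sset a b u 0).card = u := by
  intro u
  induction u with
  | zero => intro _; rw [Sset_zero]; rfl
  | succ u ih =>
    intro h
    rw [Sset_succ_u a b u 0 (by omega), Finset.card_insert_of_notMem (notmem_u a b u 0 (by omega)),
      ih (by omega)]

lemma card_Sset (a b u v : ℕ) (hu : u ≤ a+1) (hv : v ≤ b+1) : (Sset a b u v).card = u + v := by
  induction v with
  | zero => exact card_Sset_u a b u hu
  | succ v ih =>
    rw [Sset_succ_v a b u v (by omega), Finset.card_insert_of_notMem (notmem_v a b u v (by omega)),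
      ih (by omega)]
    omega

lemma Sset_inj (a b u v u' v' : ℕ) (hu : u ≤ a+1) (hv : v ≤ b+1) (hu' : u' ≤ a+1)
    (hv' : v' ≤ b+1) (h : Sset a b u v = Sset a b u' v') : u = u' ∧ v = v' := by
  have hs := sumL a b
  have H : ∀ t, t < a+b+2 → (memS a b u v t ↔ memS a b u' v' t) := by
    intro t ht
    have h2 := Finset.ext_iff.mp h ⟨t, by omega⟩
    simp only [mem_Sset] at h2
    exact h2
  have key : ∀ w w', w ≤ a+1 → w' ≤ a+1 →
      (∀ t, 1 ≤ t → t ≤ a+1 → (a+2 ≤ w+t ↔ a+2 ≤ w'+t)) → w' ≤ w := by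
    intro w w' hw hw' hiff
    by_contra hlt
    push_neg at hlt
    have := (hiff (a+2-w') (by omega) (by omega)).mpr (by omega)
    omega
  have hiffu : ∀ t, 1 ≤ t → t ≤ a+1 → (a+2 ≤ u+t ↔ a+2 ≤ u'+t) := by
    intro t h1 h2
    have Ht := H t (by omega)
    simpa [memS, show ¬ t = 0 by omega, h2] using Ht
  have hu1 : u = u' := le_antisymm (key u' u hu' hu fun t h1 h2 => (hiffu t h1 h2).symm)
    (key u u' hu hu' hiffu)
  have H0 := H 0 (by omega)
  simp only [memS, if_pos rfl] at H0
  have key2 : ∀ w w', w ≤ b+1 → w' ≤ b+1 → (1 ≤ w ↔ 1 ≤ w') →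
      (∀ t, a+2 ≤ t → t ≤ a+b+1 → (a+b+3 ≤ w+t ↔ a+b+3 ≤ w'+t)) → w' ≤ w := by
    intro w w' hw hw' h0 hiff
    by_contra hlt
    push_neg at hlt
    have hw1 : 1 ≤ w := h0.mpr (by omega)
    have := (hiff (a+b+3-w') (by omega) (by omega)).mpr (by omega)
    omega
  have hiffv : ∀ t, a+2 ≤ t → t ≤ a+b+1 → (a+b+3 ≤ v+t ↔ a+b+3 ≤ v'+t) := by
    intro t h1 h2
    have Ht := H t (by omega)
    simpa [memS, show ¬ t = 0 by omega, show ¬ t ≤ a+1 by omega] using Ht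
  exact ⟨hu1, le_antisymm (key2 v' v hv' hv H0.symm fun t h1 h2 => (hiffv t h1 h2).symm)
    (key2 v v' hv hv' H0 hiffv)⟩

noncomputable def nd (a b t : ℕ) : Fin ([1,a,1,b].sum) :=
  ⟨t % [1,a,1,b].sum, Nat.mod_lt _ (by have := sumL a b; omega)⟩

lemma nd_val (a b t : ℕ) (ht : t < a+b+2) : (nd a b t).val = t :=
  Nat.mod_eq_of_lt (by have := sumL a b; omega)

lemma exists_S (a b : ℕ) (ha : 0 < a) (hb : 0 < b) (I : Finset (Fin ([1,a,1,b].sum)))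
    (hI : IsCIdeal [1,a,1,b] I) :
    ∃ u v, u ≤ a+1 ∧ v ≤ b+1 ∧ ¬(u = a+1 ∧ v = 0) ∧ ¬(u = 0 ∧ v = b+1) ∧
      I = Sset a b u v := by
  have hs := sumL a b
  have step : ∀ x y, cStep [1,a,1,b] x y → y ∈ I → x ∈ I :=
    fun x y h hy => hI x y (Relation.ReflTransGen.single h) hy
  have c1 : ∀ t, 1 ≤ t → t ≤ a → nd a b t ∈ I → nd a b (t+1) ∈ I := by
    intro t h1 h2 hm
    refine step _ _ ((cstep_iff a b ha hb _ _).mpr ?_) hm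
    right; right; left
    rw [nd_val a b t (by omega), nd_val a b (t+1) (by omega)]
    exact ⟨h1, h2, rfl⟩
  have c2 : nd a b 1 ∈ I → nd a b 0 ∈ I := by
    intro hm
    refine step _ _ ((cstep_iff a b ha hb _ _).mpr ?_) hm
    left
    rw [nd_val a b 0 (by omega), nd_val a b 1 (by omega)]
    exact ⟨rfl, rfl⟩
  have c3 : nd a b (a+2) ∈ I → nd a b (a+1) ∈ I := by
    intro hm
    refine step _ _ ((cstep_iff a b ha hb _ _).mpr ?_) hm
    right; left
    rw [nd_val a b (a+1) (by omega), nd_val a b (a+2) (by omega)]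
    exact ⟨rfl, rfl⟩
  have c4 : ∀ t, a+2 ≤ t → t ≤ a+b → nd a b t ∈ I → nd a b (t+1) ∈ I := by
    intro t h1 h2 hm
    refine step _ _ ((cstep_iff a b ha hb _ _).mpr ?_) hm
    right; right; right; left
    rw [nd_val a b t (by omega), nd_val a b (t+1) (by omega)]
    exact ⟨h1, h2, rfl⟩
  have c5 : nd a b (a+b+1) ∈ I → nd a b 0 ∈ I := by
    intro hm
    refine step _ _ ((cstep_iff a b ha hb _ _).mpr ?_) hm
    right; right; right; right
    rw [nd_val a b 0 (by omega), nd_val a b (a+b+1) (by omega)]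
    exact ⟨rfl, rfl⟩
  -- chain 1
  have hex : ∃ k, k = a+1 ∨ nd a b (k+1) ∈ I := ⟨a+1, Or.inl rfl⟩
  set m0 := Nat.find hex with hm0def
  have hm0 : m0 ≤ a+1 := Nat.find_min' hex (Or.inl rfl)
  have hmem1 : ∀ t, 1 ≤ t → t ≤ a+1 → (nd a b t ∈ I ↔ m0 + 1 ≤ t) := by
    intro t ht ht2
    constructor
    · intro hmI
      by_contra hc
      push_neg at hc
      have hnp := Nat.find_min hex (show t-1 < m0 by omega)
      push_neg at hnp
      obtain ⟨h1', h2'⟩ := hnp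
      rw [show t-1+1 = t by omega] at h2'
      exact h2' hmI
    · intro hge
      have hbase : nd a b (m0+1) ∈ I := by
        rcases Nat.find_spec hex with h | h
        · omega
        · exact h
      have climb : ∀ s, m0+1 ≤ s → s ≤ a+1 → nd a b s ∈ I := by
        intro s hs1
        induction s, hs1 using Nat.le_induction with
        | base => intro _; exact hbase
        | succ s hss ih => intro h2; exact c1 s (by omega) (by omega) (ih (by omega))
      exact climb t hge ht2
  -- chain 2
  have hex2 : ∃ k, k = b ∨ nd a b (a+2+k) ∈ I := ⟨b, Or.inl rfl⟩
  set m2 := Nat.find hex2 with hm2def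
  have hm2 : m2 ≤ b := Nat.find_min' hex2 (Or.inl rfl)
  have hmem2 : ∀ t, a+2 ≤ t → t ≤ a+b+1 → (nd a b t ∈ I ↔ a+2+m2 ≤ t) := by
    intro t ht ht2
    constructor
    · intro hmI
      by_contra hc
      push_neg at hc
      have hnp := Nat.find_min hex2 (show t-(a+2) < m2 by omega)
      push_neg at hnp
      obtain ⟨h1', h2'⟩ := hnp
      rw [show a+2+(t-(a+2)) = t by omega] at h2'
      exact h2' hmI
    · intro hge
      have hbase : nd a b (a+2+m2) ∈ I := by
        rcases Nat.find_spec hex2 with h | h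
        · omega
        · exact h
      have climb : ∀ s, a+2+m2 ≤ s → s ≤ a+b+1 → nd a b s ∈ I := by
        intro s hs1
        induction s, hs1 using Nat.le_induction with
        | base => intro _; exact hbase
        | succ s hss ih => intro h2; exact c4 s (by omega) (by omega) (ih (by omega))
      exact climb t hge ht2
  have hv0 : nd a b 0 ∉ I → m2 = b := by
    intro h0
    by_contra hc
    have : nd a b (a+b+1) ∈ I := (hmem2 (a+b+1) (by omega) (by omega)).mpr (by omega)
    exact h0 (c5 this)
  refine ⟨a+1-m0, if nd a b 0 ∈ I then b-m2+1 else 0, by omega, ?_, ?_, ?_, ?_⟩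
  · split_ifs <;> omega
  · rintro ⟨hu, hv⟩
    have hm00 : m0 = 0 := by omega
    have h1I : nd a b 1 ∈ I := (hmem1 1 (by omega) (by omega)).mpr (by omega)
    have h0I := c2 h1I
    rw [if_pos h0I] at hv
    omega
  · rintro ⟨hu, hv⟩
    have h0I : nd a b 0 ∈ I := by
      by_contra h0
      rw [if_neg h0] at hv
      omega
    rw [if_pos h0I] at hv
    have hm20 : m2 = 0 := by omega
    have hA : nd a b (a+2) ∈ I := (hmem2 (a+2) (by omega) (by omega)).mpr (by omega)
    have hB := c3 hA
    have := (hmem1 (a+1) (by omega) (by omega)).mp hB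
    omega
  · ext x
    rcases x with ⟨t, htlt⟩
    have ht : t < a+b+2 := by omega
    have hxnd : (⟨t, htlt⟩ : Fin ([1,a,1,b].sum)) = nd a b t := Fin.ext (nd_val a b t ht).symm
    rw [hxnd, mem_Sset, nd_val a b t ht]
    rcases Nat.lt_or_ge t 1 with h1 | h1
    · have t0 : t = 0 := by omega
      subst t0
      simp only [memS]
      rw [if_pos trivial]
      by_cases h0 : nd a b 0 ∈ I
      · rw [if_pos h0]
        exact ⟨fun _ => by omega, fun _ => h0⟩
      · rw [if_neg h0]
        exact ⟨fun h => absurd h h0, fun h => by omega⟩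
    · rcases Nat.lt_or_ge t (a+2) with h2 | h2
      · rw [hmem1 t (by omega) (by omega)]
        simp only [memS, if_neg (show ¬ t = 0 by omega), if_pos (show t ≤ a+1 by omega)]
        omega
      · rw [hmem2 t (by omega) (by omega)]
        simp only [memS, if_neg (show ¬ t = 0 by omega), if_neg (show ¬ t ≤ a+1 by omega)]
        by_cases h0 : nd a b 0 ∈ I
        · rw [if_pos h0]
          omega
        · rw [if_neg h0]
          have := hv0 h0
          omega

noncomputable def W (a b : ℕ) : Finset (ℕ × ℕ) :=
  (Finset.range (a+2) ×ˢ Finset.range (b+2)).filter fun p =>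
    ¬(p.1 = a+1 ∧ p.2 = 0) ∧ ¬(p.1 = 0 ∧ p.2 = b+1)

lemma mem_W {a b : ℕ} {p : ℕ × ℕ} : p ∈ W a b ↔
    p.1 ≤ a+1 ∧ p.2 ≤ b+1 ∧ ¬(p.1 = a+1 ∧ p.2 = 0) ∧ ¬(p.1 = 0 ∧ p.2 = b+1) := by
  simp only [W, Finset.mem_filter, Finset.mem_product, Finset.mem_range, Nat.lt_succ_iff]
  tauto

lemma cRank_eq (a b : ℕ) (ha : 0 < a) (hb : 0 < b) (k : ℕ) :
    cRank [1,a,1,b] k = ((W a b).filter fun p => p.1+p.2 = k).card := by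
  rw [cRank, Nat.card_eq_fintype_card, Fintype.card_subtype]
  symm
  apply Finset.card_bij (i := fun p _ => Sset a b p.1 p.2)
  · intro p hp
    rw [Finset.mem_filter, mem_W] at hp
    simp only [Finset.mem_filter, Finset.mem_univ, true_and, Set.mem_setOf_eq]
    exact ⟨Sset_ideal a b _ _ ha hb hp.1.1 hp.1.2.1 hp.1.2.2.1 hp.1.2.2.2,
      by rw [card_Sset a b _ _ hp.1.1 hp.1.2.1]; exact hp.2⟩
  · intro p hp q hq heq
    rw [Finset.mem_filter, mem_W] at hp hq
    obtain ⟨h1, h2⟩ := Sset_inj a b p.1 p.2 q.1 q.2 hp.1.1 hp.1.2.1 hq.1.1 hq.1.2.1 heq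
    exact Prod.ext h1 h2
  · intro I hIm
    simp only [Finset.mem_filter, Finset.mem_univ, true_and, Set.mem_setOf_eq] at hIm
    obtain ⟨hI, hk⟩ := hIm
    obtain ⟨u, v, hu, hv, hc1, hc2, hIS⟩ := exists_S a b ha hb I hI
    have hkuv : u + v = k := by
      rw [hIS, card_Sset a b u v hu hv] at hk
      exact hk
    exact ⟨(u, v), by rw [Finset.mem_filter, mem_W]; exact ⟨⟨hu, hv, hc1, hc2⟩, hkuv⟩, hIS.symm⟩

lemma total_eq (a b : ℕ) (ha : 0 < a) (hb : 0 < b) :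
    Nat.card {I : Finset (Fin ([1,a,1,b].sum)) // IsCIdeal [1,a,1,b] I} = (W a b).card := by
  rw [Nat.card_eq_fintype_card, Fintype.card_subtype]
  symm
  apply Finset.card_bij (i := fun p _ => Sset a b p.1 p.2)
  · intro p hp
    rw [mem_W] at hp
    simp only [Finset.mem_filter, Finset.mem_univ, true_and, Set.mem_setOf_eq]
    exact Sset_ideal a b _ _ ha hb hp.1 hp.2.1 hp.2.2.1 hp.2.2.2
  · intro p hp q hq heq
    rw [mem_W] at hp hq
    obtain ⟨h1, h2⟩ := Sset_inj a b p.1 p.2 q.1 q.2 hp.1 hp.2.1 hq.1 hq.2.1 heq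
    exact Prod.ext h1 h2
  · intro I hIm
    simp only [Finset.mem_filter, Finset.mem_univ, true_and, Set.mem_setOf_eq] at hIm
    obtain ⟨u, v, hu, hv, hc1, hc2, hIS⟩ := exists_S a b ha hb I hIm
    exact ⟨(u, v), mem_W.mpr ⟨hu, hv, hc1, hc2⟩, hIS.symm⟩

lemma filter_not_W (a b : ℕ) (ha : 0 < a) (hb : 0 < b) :
    ((Finset.range (a+2) ×ˢ Finset.range (b+2)).filter fun p =>
      ¬(¬(p.1 = a+1 ∧ p.2 = 0) ∧ ¬(p.1 = 0 ∧ p.2 = b+1))) = {(a+1, 0), (0, b+1)} := by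
  ext p
  simp only [Finset.mem_filter, Finset.mem_product, Finset.mem_range, Finset.mem_insert,
    Finset.mem_singleton, Prod.ext_iff, Nat.lt_succ_iff]
  constructor
  · rintro ⟨⟨h1, h2⟩, h3⟩
    tauto
  · rintro (⟨h1, h2⟩ | ⟨h1, h2⟩) <;> exact ⟨⟨by omega, by omega⟩, by tauto⟩

lemma W_card (a b : ℕ) (ha : 0 < a) (hb : 0 < b) : (W a b).card = (a+2)*(b+2) - 2 := by
  have h := Finset.card_filter_add_card_filter_not
    (s := Finset.range (a+2) ×ˢ Finset.range (b+2))
    (p := fun p => ¬(p.1 = a+1 ∧ p.2 = 0) ∧ ¬(p.1 = 0 ∧ p.2 = b+1))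
  rw [filter_not_W a b ha hb] at h
  have hpair : ({(a+1, 0), (0, b+1)} : Finset (ℕ × ℕ)).card = 2 := by
    rw [Finset.card_insert_of_notMem (by simp [Prod.ext_iff]), Finset.card_singleton]
  rw [Finset.card_product, Finset.card_range, Finset.card_range, hpair] at h
  rw [W]
  omega

end CF

open Polynomial in
theorem circular_rank_1a1b (a b : ℕ) (ha : 0 < a) (hb : 0 < b) :
    (∑ k ∈ Finset.range ([1, a, 1, b].sum + 1), (cRank [1, a, 1, b] k : Polynomial ℤ) * X ^ k) =
      (∑ i ∈ Finset.range (a + 2), (X : Polynomial ℤ) ^ i) *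
          (∑ i ∈ Finset.range (b + 2), (X : Polynomial ℤ) ^ i) -
        X ^ (a + 1) - X ^ (b + 1) ∧
    Nat.card {I : Finset (Fin ([1, a, 1, b].sum)) // IsCIdeal [1, a, 1, b] I} =
      (a + 2) * (b + 2) - 2 := by
  have hs := CF.sumL a b
  constructor
  · have step1 : ∀ k, (cRank [1, a, 1, b] k : Polynomial ℤ) * X ^ k =
        ∑ p ∈ (CF.W a b).filter (fun p => p.1 + p.2 = k), (X : Polynomial ℤ) ^ (p.1 + p.2) := by
      intro k
      rw [CF.cRank_eq a b ha hb k,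
        show (∑ p ∈ (CF.W a b).filter (fun p => p.1 + p.2 = k),
            (X : Polynomial ℤ) ^ (p.1 + p.2)) =
          ∑ _p ∈ (CF.W a b).filter (fun p => p.1 + p.2 = k), (X : Polynomial ℤ) ^ k from
          Finset.sum_congr rfl fun p hp => by rw [(Finset.mem_filter.mp hp).2],
        Finset.sum_const, nsmul_eq_mul]
    rw [Finset.sum_congr rfl fun k _ => step1 k]
    have hfib : (∑ k ∈ Finset.range ([1, a, 1, b].sum + 1),
        ∑ p ∈ (CF.W a b).filter (fun p => p.1 + p.2 = k), (X : Polynomial ℤ) ^ (p.1 + p.2)) =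
        ∑ p ∈ CF.W a b, (X : Polynomial ℤ) ^ (p.1 + p.2) :=
      Finset.sum_fiberwise_of_maps_to
        (fun p hp => by
          rw [CF.mem_W] at hp
          rw [Finset.mem_range]
          omega) _
    rw [hfib]
    have hsplit := Finset.sum_filter_add_sum_filter_not
      (Finset.range (a+2) ×ˢ Finset.range (b+2))
      (fun p => ¬(p.1 = a+1 ∧ p.2 = 0) ∧ ¬(p.1 = 0 ∧ p.2 = b+1))
      (fun p => (X : Polynomial ℤ) ^ (p.1 + p.2))
    rw [CF.filter_not_W a b ha hb,
      Finset.sum_pair (show ((a+1 : ℕ), (0:ℕ)) ≠ ((0:ℕ), (b+1:ℕ)) by simp [Prod.ext_iff])] at hsplit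
    simp only [add_zero, zero_add] at hsplit
    have hprod : (∑ p ∈ Finset.range (a+2) ×ˢ Finset.range (b+2),
        (X : Polynomial ℤ) ^ (p.1 + p.2)) =
        (∑ i ∈ Finset.range (a + 2), (X : Polynomial ℤ) ^ i) *
          (∑ i ∈ Finset.range (b + 2), (X : Polynomial ℤ) ^ i) := by
      rw [Finset.sum_mul_sum, Finset.sum_product]
      simp_rw [pow_add]
    have hW : (CF.W a b) = (Finset.range (a+2) ×ˢ Finset.range (b+2)).filter
        (fun p => ¬(p.1 = a+1 ∧ p.2 = 0) ∧ ¬(p.1 = 0 ∧ p.2 = b+1)) := rfl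
    rw [hW]
    linear_combination hsplit + hprod
  · rw [CF.total_eq a b ha hb, CF.W_card a b ha hb]
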